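/- arXiv:1705.08740 — 7 statements merged into one kernel-verified Lean document; each statement's English description precedes it below -/
import Mathlib

section
/- Let T be a tensor of rank r with a rank decomposition T = T_1 + ... + T_r into simple tensors. If two 3-slices of T (with indices α and β) coincide, then for every i, the 3-slices of T_i with indices α and β coincide as well. -/
/-- A 3-dimensional tensor is simple if `T i j k = a i * b j * c k`. -/
def Simple {I J K : Type*} (T : I → J → K → ℂ) : Prop :=
  ∃ (a : I → ℂ) (b : J → ℂ) (c : K → ℂ), ∀ i j k, T i j k = a i * b j * c k

/-- The tensor rank: the smallest `r` such that `T` is a sum of `r` simple tensors. -/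
noncomputable def trank {I J K : Type*} (T : I → J → K → ℂ) : ℕ :=
  sInf {r | ∃ f : Fin r → (I → J → K → ℂ),
    (∀ u, Simple (f u)) ∧ ∀ i j k, (∑ u, f u i j k) = T i j k}

/-- If two 3-slices of `T` coincide, then in any rank decomposition of `T`
the corresponding 3-slices of each summand coincide as well. -/
theorem stmt0 {I J K : Type*} [Fintype I] [Fintype J] [Fintype K]
    (T : I → J → K → ℂ) (r : ℕ) (hr : r = trank T)
    (f : Fin r → (I → J → K → ℂ)) (hsimple : ∀ u, Simple (f u))
    (hsum : ∀ i j k, (∑ u, f u i j k) = T i j k)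
    (α β : K) (hT : ∀ i j, T i j α = T i j β) :
    ∀ u i j, f u i j α = f u i j β := by
  by_contra h
  push_neg at h
  obtain ⟨u₀, i₀, j₀, hne⟩ := h
  choose a b c hfab using hsimple
  set d : Fin r → ℂ := fun u => c u α - c u β with hd
  have key : ∀ i j, (∑ u, a u i * b u j * d u) = 0 := by
    intro i j
    have h1 : (∑ u, f u i j α) - (∑ u, f u i j β) = 0 := by
      rw [hsum i j α, hsum i j β, hT i j, sub_self]
    rw [← Finset.sum_sub_distrib] at h1
    calc (∑ u, a u i * b u j * d u)
        = ∑ u, (f u i j α - f u i j β) := by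
          apply Finset.sum_congr rfl
          intro u _
          rw [hfab u i j α, hfab u i j β, hd]
          ring
      _ = 0 := h1
  have hd0 : d u₀ ≠ 0 := by
    intro h0
    apply hne
    have := hfab u₀ i₀ j₀ α
    have h2 : c u₀ α = c u₀ β := sub_eq_zero.mp h0
    rw [hfab u₀ i₀ j₀ α, hfab u₀ i₀ j₀ β, h2]
  obtain ⟨n, rfl⟩ : ∃ n, r = n + 1 := ⟨r - 1, (Nat.succ_pred_eq_of_pos u₀.pos).symm⟩
  set s : Fin n → Fin (n + 1) := u₀.succAbove with hs
  set g : Fin n → (I → J → K → ℂ) := fun v i j k =>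
    a (s v) i * b (s v) j * (c (s v) k - (d (s v) / d u₀) * c u₀ k) with hg
  have hmem : n ∈ {m | ∃ f : Fin m → (I → J → K → ℂ),
      (∀ u, Simple (f u)) ∧ ∀ i j k, (∑ u, f u i j k) = T i j k} := by
    refine ⟨g, fun v => ⟨a (s v), b (s v),
      fun k => c (s v) k - (d (s v) / d u₀) * c u₀ k, fun i j k => rfl⟩, ?_⟩
    intro i j k
    have hk := key i j
    rw [Fin.sum_univ_succAbove _ u₀] at hk
    have hrest : (∑ v, a (s v) i * b (s v) j * d (s v)) =
        -(a u₀ i * b u₀ j * d u₀) := by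
      linear_combination hk
    have expand : (∑ v, g v i j k) =
        (∑ v, a (s v) i * b (s v) j * c (s v) k) -
          (c u₀ k / d u₀) * (∑ v, a (s v) i * b (s v) j * d (s v)) := by
      rw [Finset.mul_sum, ← Finset.sum_sub_distrib]
      apply Finset.sum_congr rfl
      intro v _
      rw [hg]
      ring
    rw [expand, hrest]
    have hT' : (∑ u, f u i j k) = T i j k := hsum i j k
    rw [Fin.sum_univ_succAbove _ u₀] at hT'
    rw [← hT']
    have h3 : ∀ v : Fin n, f (s v) i j k = a (s v) i * b (s v) j * c (s v) k :=
      fun v => hfab (s v) i j k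
    rw [hfab u₀ i j k, Finset.sum_congr rfl (fun v _ => h3 v)]
    field_simp
    ring
  have hle : trank T ≤ n := Nat.sInf_le hmem
  omega
end

section
/- Let T ∈ ℂ^{I×J×K} with K = K' ∪ {1,...,k}, and suppose the 3-slices S_1, ..., S_k of T (with indices 1,...,k) are linearly independent rank-one matrices. Then rank T = k + min { rank T' : T' ∈ T mod₃ span(S_1,...,S_k) }, where T mod₃ V is the set of tensors obtained from T by subtracting from each 3-slice an arbitrary element of V. -/
open Finset Submodule Module Matrix

/-- Lemma A : if every slice lies in the span of `n` outer-product matrices,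
rank is at most `n`. -/
lemma trank_le_of_slices_mem {I J K : Type*} {T : I → J → K → ℂ} {n : ℕ}
    (G : Fin n → Matrix I J ℂ)
    (hG : ∀ t, ∃ (x : I → ℂ) (y : J → ℂ), G t = Matrix.of fun i j => x i * y j)
    (hmem : ∀ κ, (Matrix.of fun i j => T i j κ) ∈ Submodule.span ℂ (Set.range G)) :
    trank T ≤ n := by
  choose x y hxy using hG
  have hc : ∀ κ, ∃ c : Fin n → ℂ, ∑ t, c t • G t = Matrix.of fun i j => T i j κ := by
    intro κ
    exact (mem_span_range_iff_exists_fun ℂ).mp (hmem κ)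
  choose c hc using hc
  refine Nat.sInf_le ⟨fun t i j κ => x t i * y t j * c κ t, ?_, ?_⟩
  · intro t; exact ⟨x t, y t, fun κ => c κ t, fun i j κ => rfl⟩
  · intro i j κ
    have h2 : (∑ t, c κ t • G t) i j = T i j κ := by rw [hc κ]; rfl
    rw [← h2, Matrix.sum_apply]
    refine Finset.sum_congr rfl fun t _ => ?_
    rw [hxy]
    simp [Matrix.smul_apply]
    ring

lemma trank_decomp {I J K : Type*} [Fintype I] [Fintype J] (T : I → J → K → ℂ) :
    ∃ f : Fin (trank T) → (I → J → K → ℂ),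
      (∀ u, Simple (f u)) ∧ ∀ i j k, (∑ u, f u i j k) = T i j k := by
  classical
  have hne : {r | ∃ f : Fin r → (I → J → K → ℂ),
      (∀ u, Simple (f u)) ∧ ∀ i j k, (∑ u, f u i j k) = T i j k}.Nonempty := by
    refine ⟨Fintype.card (I × J), ?_⟩
    set e := (Fintype.equivFin (I × J)).symm with he
    refine ⟨fun u i j κ => (if (e u).1 = i then (1:ℂ) else 0) *
      ((if (e u).2 = j then (1:ℂ) else 0) * T (e u).1 (e u).2 κ), ?_, ?_⟩
    · intro u
      exact ⟨fun i => if (e u).1 = i then 1 else 0, fun j => if (e u).2 = j then 1 else 0,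
        fun κ => T (e u).1 (e u).2 κ, fun i j κ => by ring⟩
    · intro i j κ
      refine (Fintype.sum_equiv e _
        (fun p : I × J => (if p.1 = i then (1:ℂ) else 0) *
          ((if p.2 = j then (1:ℂ) else 0) * T p.1 p.2 κ)) (fun u => rfl)).trans ?_
      rw [Fintype.sum_prod_type]
      simp
  exact Nat.sInf_mem hne

lemma trank_add_le {I J K : Type*} [Fintype I] [Fintype J] (T1 T2 : I → J → K → ℂ) :
    trank (fun i j κ => T1 i j κ + T2 i j κ) ≤ trank T1 + trank T2 := by
  obtain ⟨f, hf, hf2⟩ := trank_decomp T1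
  obtain ⟨g, hg, hg2⟩ := trank_decomp T2
  refine Nat.sInf_le ⟨Fin.append f g, ?_, ?_⟩
  · intro u
    refine Fin.addCases (fun u => ?_) (fun u => ?_) u
    · rw [Fin.append_left]; exact hf u
    · rw [Fin.append_right]; exact hg u
  · intro i j κ
    rw [Fin.sum_univ_add]
    simp only [Fin.append_left, Fin.append_right]
    rw [hf2, hg2]

lemma exists_outer_of_rank_one {I J : Type*} [Fintype I] [Fintype J] {A : Matrix I J ℂ}
    (h : A.rank = 1) : ∃ (x : I → ℂ) (y : J → ℂ), A = Matrix.of fun i j => x i * y j := by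
  have h1 : finrank ℂ (span ℂ (Set.range Aᵀ)) ≤ 1 := by
    rw [show Set.range Aᵀ = Set.range A.col from rfl, ← Matrix.rank_eq_finrank_span_cols, h]
  obtain ⟨v, hv⟩ := finrank_le_one_iff.mp h1
  have hcol : ∀ j, ∃ c : ℂ, c • (v : I → ℂ) = Aᵀ j := by
    intro j
    obtain ⟨c, hc⟩ := hv ⟨Aᵀ j, subset_span (Set.mem_range_self j)⟩
    exact ⟨c, congrArg Subtype.val hc⟩
  choose y hy using hcol
  refine ⟨fun i => (v : I → ℂ) i, y, ?_⟩
  ext i j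
  have := congrFun (hy j) i
  simp only [Pi.smul_apply, smul_eq_mul, Matrix.transpose_apply] at this
  rw [Matrix.of_apply, mul_comm]
  exact this.symm

/-- If the 3-slices of `T` indexed by `{1,…,k}` (here `Fin k` in `Fin k ⊕ K'`) are
linearly independent rank-one matrices, then
`rank T = k + min { rank T' : T' ∈ T mod₃ span(S₁,…,S_k) }`. -/
theorem stmt4 {I J K' : Type*} [Fintype I] [Fintype J] [Fintype K'] (k : ℕ)
    (T : I → J → (Fin k ⊕ K') → ℂ)
    (S : Fin k → Matrix I J ℂ)
    (hS : ∀ q, S q = Matrix.of fun i j => T i j (Sum.inl q))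
    (hrank1 : ∀ q, (S q).rank = 1)
    (hli : LinearIndependent ℂ S) :
    trank T = k + sInf {r | ∃ T' : I → J → (Fin k ⊕ K') → ℂ,
      (∀ κ, ∃ v ∈ Submodule.span ℂ (Set.range S),
        (Matrix.of fun i j => T' i j κ) = (Matrix.of fun i j => T i j κ) - v) ∧
      trank T' = r} := by
  classical
  set Q : Set ℕ := {r | ∃ T' : I → J → (Fin k ⊕ K') → ℂ,
      (∀ κ, ∃ v ∈ Submodule.span ℂ (Set.range S),
        (Matrix.of fun i j => T' i j κ) = (Matrix.of fun i j => T i j κ) - v) ∧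
      trank T' = r} with hQ
  have houter : ∀ q, ∃ (x : I → ℂ) (y : J → ℂ), S q = Matrix.of fun i j => x i * y j :=
    fun q => exists_outer_of_rank_one (hrank1 q)
  have hQne : Q.Nonempty := ⟨trank T, T, fun κ => ⟨0, Submodule.zero_mem _, by simp⟩, rfl⟩
  -- upper bound
  have hle : trank T ≤ k + sInf Q := by
    obtain ⟨T', hv', hr'⟩ := Nat.sInf_mem hQne
    choose v hvV hveq using hv'
    have hTeq : T = fun i j κ => T' i j κ + v κ i j := by
      funext i j κ
      have h1 := congrFun (congrFun (hveq κ) i) j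
      simp only [Matrix.of_apply, Matrix.sub_apply] at h1
      rw [h1]; ring
    have h2 : trank (fun i j κ => v κ i j : I → J → (Fin k ⊕ K') → ℂ) ≤ k :=
      trank_le_of_slices_mem S houter (fun κ => hvV κ)
    calc trank T = trank (fun i j κ => T' i j κ + v κ i j) := by rw [← hTeq]
      _ ≤ trank T' + trank (fun i j κ => v κ i j : I → J → (Fin k ⊕ K') → ℂ) :=
          trank_add_le _ _
      _ ≤ sInf Q + k := add_le_add (le_of_eq hr') h2
      _ = k + sInf Q := Nat.add_comm _ _
  -- lower bound
  have hge : k + sInf Q ≤ trank T := by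
    set r := trank T with hr
    obtain ⟨f, hf, hsum⟩ := trank_decomp T
    choose a b c habc using hf
    set M : Fin r → Matrix I J ℂ := fun u => Matrix.of fun i j => a u i * b u j with hM
    have hsliceW : ∀ κ, (Matrix.of fun i j => T i j κ) ∈ Submodule.span ℂ (Set.range M) := by
      intro κ
      rw [mem_span_range_iff_exists_fun]
      refine ⟨fun u => c u κ, ?_⟩
      ext i j
      simp only [Matrix.sum_apply, Matrix.smul_apply, Matrix.of_apply, smul_eq_mul]
      rw [← hsum i j κ]
      exact Finset.sum_congr rfl fun u _ => by rw [habc u]; simp only [hM, Matrix.of_apply]; ring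
    have hSW : Set.range S ⊆ ↑(Submodule.span ℂ (Set.range M)) := by
      rintro _ ⟨q, rfl⟩
      rw [hS q]; exact hsliceW (Sum.inl q)
    have hsr : LinearIndependent ℂ ((↑) : Set.range S → Matrix I J ℂ) := (linearIndepOn_id_range_iff hli.injective).mpr hli
    obtain ⟨bs, hbt, hsb, htb, hbli⟩ := exists_linearIndepOn_id_extension hsr
      (Set.subset_union_left (t := Set.range M))
    have hbfin : bs.Finite := ((Set.finite_range S).union (Set.finite_range M)).subset hbt
    haveI : Fintype bs := hbfin.fintype
    have hspan1 : Submodule.span ℂ (Set.range M) ≤ Submodule.span ℂ bs :=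
      Submodule.span_le.mpr (fun x hx => htb (Set.mem_union_right _ hx))
    have hspan2 : Submodule.span ℂ bs ≤ Submodule.span ℂ (Set.range M) := by
      refine Submodule.span_le.mpr (fun x hx => ?_)
      rcases hbt hx with h | h
      · exact hSW h
      · exact subset_span h
    have heqspan : Submodule.span ℂ bs = Submodule.span ℂ (Set.range M) :=
      le_antisymm hspan2 hspan1
    -- cardinalities
    have hcard1 : bs.toFinset.card ≤ r := by
      have h1 : finrank ℂ (Submodule.span ℂ bs) = bs.toFinset.card :=
        finrank_span_set_eq_card hbli
      have h3 := finrank_range_le_card (R := ℂ) M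
      rw [Set.finrank] at h3
      rw [heqspan] at h1
      rw [h1] at h3
      simpa using h3
    have hSfin : (Set.range S).toFinset ⊆ bs.toFinset := by
      rw [Set.toFinset_subset_toFinset]; exact hsb
    have hScard : (Set.range S).toFinset.card = k := by
      rw [Set.toFinset_range, Finset.card_image_of_injective _ hli.injective]
      simp
    set D : Finset (Matrix I J ℂ) := bs.toFinset \ (Set.range S).toFinset with hD
    have hkr : k ≤ r := by
      calc k = (Set.range S).toFinset.card := hScard.symm
        _ ≤ bs.toFinset.card := Finset.card_le_card hSfin
        _ ≤ r := hcard1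
    have hn : D.card ≤ r - k := by
      rw [hD, Finset.card_sdiff_of_subset hSfin, hScard]
      omega
    have hDM : ∀ N ∈ D, N ∈ Set.range M := by
      intro N hN
      rw [hD, Finset.mem_sdiff, Set.mem_toFinset, Set.mem_toFinset] at hN
      rcases hbt hN.1 with h | h
      · exact absurd h hN.2
      · exact h
    set G : Fin D.card → Matrix I J ℂ := fun t => ((D.equivFin.symm t : D) : Matrix I J ℂ)
      with hG
    have hGrange : Set.range G = (↑D : Set (Matrix I J ℂ)) := by
      ext N
      constructor
      · rintro ⟨t, rfl⟩
        exact (D.equivFin.symm t).2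
      · intro h
        exact ⟨D.equivFin ⟨N, h⟩, by simp [hG]⟩
    have hGout : ∀ t, ∃ (x : I → ℂ) (y : J → ℂ), G t = Matrix.of fun i j => x i * y j := by
      intro t
      obtain ⟨u, hu⟩ := hDM _ (D.equivFin.symm t).2
      exact ⟨a u, b u, hu.symm⟩
    have hbsub : bs ⊆ Set.range S ∪ (↑D : Set (Matrix I J ℂ)) := by
      intro N hN
      by_cases hNS : N ∈ Set.range S
      · exact Set.mem_union_left _ hNS
      · refine Set.mem_union_right _ ?_
        rw [Finset.mem_coe, hD, Finset.mem_sdiff, Set.mem_toFinset, Set.mem_toFinset]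
        exact ⟨hN, hNS⟩
    have hsplit : Submodule.span ℂ bs ≤
        Submodule.span ℂ (Set.range S) ⊔ Submodule.span ℂ (↑D : Set (Matrix I J ℂ)) := by
      refine Submodule.span_le.mpr fun N hN => ?_
      rcases hbsub hN with h | h
      · exact Submodule.mem_sup_left (subset_span h)
      · exact Submodule.mem_sup_right (subset_span h)
    have hmem : ∀ κ, (Matrix.of fun i j => T i j κ) ∈
        Submodule.span ℂ (Set.range S) ⊔ Submodule.span ℂ (↑D : Set (Matrix I J ℂ)) :=
      fun κ => hsplit (heqspan.ge (hsliceW κ))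
    have hvw : ∀ κ, ∃ v ∈ Submodule.span ℂ (Set.range S),
        ∃ w ∈ Submodule.span ℂ (↑D : Set (Matrix I J ℂ)),
        v + w = (Matrix.of fun i j => T i j κ) := by
      intro κ
      exact Submodule.mem_sup.mp (hmem κ)
    choose v hvV w hwD hvweq using hvw
    set T' : I → J → (Fin k ⊕ K') → ℂ := fun i j κ => T i j κ - v κ i j with hT'
    have hT'slice : ∀ κ, (Matrix.of fun i j => T' i j κ) = w κ := by
      intro κ
      have := hvweq κ
      ext i j
      have h1 := congrFun (congrFun this i) j
      simp only [Matrix.add_apply, Matrix.of_apply] at h1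
      simp only [hT', Matrix.of_apply]
      rw [← h1]; ring
    have hT'rank : trank T' ≤ D.card := by
      refine trank_le_of_slices_mem G hGout fun κ => ?_
      rw [hT'slice κ, ← hGrange] at *
      exact hwD κ
    have hT'Q : trank T' ∈ Q := by
      refine ⟨T', fun κ => ⟨v κ, hvV κ, ?_⟩, rfl⟩
      ext i j
      simp [hT']
    have : sInf Q ≤ r - k := le_trans (Nat.sInf_le hT'Q) (le_trans hT'rank hn)
    omega
  exact le_antisymm hle hge
end

section
/- Let T ∈ ℂ^{I×J×K} with K = K' ∪ {1,...,k}, and suppose the 3-slices S_1, ..., S_k of T are linearly independent (not necessarily rank-one). Then rank T ≥ k + min { rank T' : T' ∈ T mod₃ span(S_1,...,S_k) }. -/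
lemma trank_le_card {I J K ι : Type*} [Fintype I] [Fintype J] [Fintype K] [Fintype ι]
    (T : I → J → K → ℂ) (f : ι → (I → J → K → ℂ))
    (h1 : ∀ u, Simple (f u)) (h2 : ∀ i j k, (∑ u, f u i j k) = T i j k) :
    trank T ≤ Fintype.card ι := by
  apply Nat.sInf_le
  refine ⟨f ∘ (Fintype.equivFin ι).symm, fun u => h1 _, fun i j k => ?_⟩
  rw [show (∑ u, (f ∘ (Fintype.equivFin ι).symm) u i j k)
      = ∑ u, (fun v => f v i j k) ((Fintype.equivFin ι).symm u) from rfl,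
    Equiv.sum_comp (Fintype.equivFin ι).symm (fun v => f v i j k)]
  exact h2 i j k

lemma trank_exists_decomp {I J K : Type*} [Fintype I] [Fintype J] [Fintype K]
    (T : I → J → K → ℂ) :
    ∃ f : Fin (trank T) → (I → J → K → ℂ),
      (∀ u, Simple (f u)) ∧ ∀ i j k, (∑ u, f u i j k) = T i j k := by
  classical
  have hne : {r | ∃ f : Fin r → (I → J → K → ℂ),
      (∀ u, Simple (f u)) ∧ ∀ i j k, (∑ u, f u i j k) = T i j k}.Nonempty := by
    set ι := I × J × K
    set F : ι → (I → J → K → ℂ) := fun p i j k =>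
      (if i = p.1 then (1:ℂ) else 0) * (if j = p.2.1 then (1:ℂ) else 0) *
        (if k = p.2.2 then T p.1 p.2.1 p.2.2 else 0) with hF
    refine ⟨Fintype.card ι, F ∘ (Fintype.equivFin ι).symm, fun u => ?_, fun i j k => ?_⟩
    · obtain ⟨p, hp⟩ : ∃ p, (Fintype.equivFin ι).symm u = p := ⟨_, rfl⟩
      exact ⟨fun i => if i = p.1 then 1 else 0, fun j => if j = p.2.1 then 1 else 0,
        fun k => if k = p.2.2 then T p.1 p.2.1 p.2.2 else 0, fun i j k => by
          show F ((Fintype.equivFin ι).symm u) i j k = _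
          rw [hp]⟩
    · rw [show (∑ u, (F ∘ (Fintype.equivFin ι).symm) u i j k)
          = ∑ u, (fun v => F v i j k) ((Fintype.equivFin ι).symm u) from rfl,
        Equiv.sum_comp (Fintype.equivFin ι).symm (fun v => F v i j k)]
      rw [Finset.sum_eq_single (⟨i, j, k⟩ : ι)]
      · simp [hF]
      · intro x _ hxne
        have hx : ¬(i = x.1 ∧ j = x.2.1 ∧ k = x.2.2) := by
          rintro ⟨h1, h2, h3⟩
          exact hxne (by cases x with | mk x1 x2 => cases x2 with | mk x21 x22 =>
            simp_all)
        by_cases h1 : i = x.1 <;> by_cases h2 : j = x.2.1 <;> by_cases h3 : k = x.2.2 <;>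
          simp_all [hF]
      · intro h; exact absurd (Finset.mem_univ _) h
  exact Nat.sInf_mem hne

open Matrix in
/-- If the 3-slices of `T` indexed by `{1,…,k}` are linearly independent
(not necessarily rank-one), then
`rank T ≥ k + min { rank T' : T' ∈ T mod₃ span(S₁,…,S_k) }`. -/
theorem stmt5 {I J K' : Type*} [Fintype I] [Fintype J] [Fintype K'] (k : ℕ)
    (T : I → J → (Fin k ⊕ K') → ℂ)
    (S : Fin k → Matrix I J ℂ)
    (hS : ∀ q, S q = Matrix.of fun i j => T i j (Sum.inl q))
    (hli : LinearIndependent ℂ S) :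
    trank T ≥ k + sInf {r | ∃ T' : I → J → (Fin k ⊕ K') → ℂ,
      (∀ κ, ∃ v ∈ Submodule.span ℂ (Set.range S),
        (Matrix.of fun i j => T' i j κ) = (Matrix.of fun i j => T i j κ) - v) ∧
      trank T' = r} := by
  classical
  obtain ⟨f, hsimple, hsum⟩ := trank_exists_decomp T
  simp only [Simple] at hsimple
  choose a b c habc using hsimple
  -- the coefficient matrix
  set M : Matrix (Fin k) (Fin (trank T)) ℂ := Matrix.of (fun q u => c u (Sum.inl q)) with hM
  have hSlice : ∀ q i j, S q i j = ∑ u, a u i * b u j * M q u := by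
    intro q i j
    rw [hS]
    show T i j (Sum.inl q) = _
    rw [← hsum i j (Sum.inl q)]
    exact Finset.sum_congr rfl fun u _ => habc u i j (Sum.inl q)
  -- injectivity of Mᵀ.mulVecLin from linear independence of slices
  have hinj : Function.Injective (Matrix.mulVecLin Mᵀ) := by
    rw [← LinearMap.ker_eq_bot, LinearMap.ker_eq_bot']
    intro x hx
    have hx' : ∀ u, ∑ q, x q * M q u = 0 := by
      intro u
      have := congrFun hx u
      simpa [Matrix.mulVecLin_apply, Matrix.mulVec, Matrix.vecMul, dotProduct,
        Matrix.transpose_apply] using this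
    have := Fintype.linearIndependent_iff.mp hli x ?_
    · funext q; exact this q
    · ext i j
      simp only [Matrix.sum_apply, Matrix.smul_apply, smul_eq_mul, Matrix.zero_apply]
      calc ∑ q, x q * S q i j = ∑ q, ∑ u, x q * (a u i * b u j * M q u) := by
            refine Finset.sum_congr rfl fun q _ => ?_
            rw [hSlice q i j, Finset.mul_sum]
        _ = ∑ u, ∑ q, x q * (a u i * b u j * M q u) := Finset.sum_comm
        _ = ∑ u, (a u i * b u j) * ∑ q, x q * M q u := by
            refine Finset.sum_congr rfl fun u _ => ?_
            rw [Finset.mul_sum]; exact Finset.sum_congr rfl fun q _ => by ring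
        _ = 0 := by simp [hx']
  -- the columns of M span ℂ^k
  have hrankT : Mᵀ.rank = k := by
    rw [Matrix.rank, LinearMap.finrank_range_of_inj hinj,
      Module.finrank_fintype_fun_eq_card, Fintype.card_fin]
  have hspan : Submodule.span ℂ (Set.range Mᵀ) = ⊤ := by
    rw [show Set.range Mᵀ = Set.range M.col from rfl, ← Matrix.range_mulVecLin]
    apply Submodule.eq_top_of_finrank_eq
    have : Module.finrank ℂ ↥(LinearMap.range M.mulVecLin) = M.rank := rfl
    rw [this, ← Matrix.rank_transpose, hrankT,
      Module.finrank_fintype_fun_eq_card, Fintype.card_fin]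
  -- pick a subset of columns forming a basis
  obtain ⟨bs, hbsub, hbspan, hbli⟩ := exists_linearIndependent ℂ (Set.range Mᵀ)
  have hbfin : bs.Finite := (Set.finite_range Mᵀ).subset hbsub
  haveI : Fintype bs := hbfin.fintype
  have hbspan' : Submodule.span ℂ bs = ⊤ := by rw [hbspan, hspan]
  let B : Module.Basis bs ℂ (Fin k → ℂ) :=
    Module.Basis.mk hbli (by rw [Subtype.range_coe, hbspan'])
  have hcardbs : Fintype.card bs = k := by
    have := Module.finrank_eq_card_basis B
    rw [Module.finrank_fintype_fun_eq_card, Fintype.card_fin] at this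
    omega
  -- choose column indices realizing the basis vectors
  choose g hg using fun v : bs => hbsub v.2
  have hginj : Function.Injective g := by
    intro v w hvw
    have : (v : Fin k → ℂ) = (w : Fin k → ℂ) := by rw [← hg v, ← hg w, hvw]
    exact Subtype.ext this
  set U : Set (Fin (trank T)) := Set.range g with hU
  haveI : Fintype U := Set.fintypeRange g
  have hcardU : Fintype.card U = k := by
    exact (Fintype.card_congr (Equiv.ofInjective g hginj)).symm.trans hcardbs
  have hkR : k ≤ trank T := by
    have := Fintype.card_le_of_injective g hginj
    rwa [hcardbs, Fintype.card_fin] at this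
  -- the evaluation map on the chosen columns
  set e : (Fin k → ℂ) →ₗ[ℂ] (U → ℂ) :=
    { toFun := fun d u => ∑ q, d q * M q u.1
      map_add' := by
        intro x y; funext u; simp [add_mul, Finset.sum_add_distrib]
      map_smul' := by
        intro m x; funext u; simp [Finset.mul_sum, mul_assoc] } with he
  have heinj : Function.Injective e := by
    rw [← LinearMap.ker_eq_bot, LinearMap.ker_eq_bot']
    intro d hd
    have hd' : ∀ u : U, ∑ q, d q * M q u.1 = 0 := fun u => congrFun hd u
    set L : (Fin k → ℂ) →ₗ[ℂ] ℂ :=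
      { toFun := fun x => ∑ q, d q * x q
        map_add' := by intro x y; simp [mul_add, Finset.sum_add_distrib]
        map_smul' := by intro m x; simp [Finset.mul_sum, mul_assoc, mul_comm, mul_left_comm] }
        with hL
    have hLbs : ∀ v ∈ bs, L v = 0 := by
      intro v hv
      have h1 : Mᵀ (g ⟨v, hv⟩) = v := hg ⟨v, hv⟩
      have : L v = ∑ q, d q * M q (g ⟨v, hv⟩) := by
        rw [hL]
        show (∑ q, d q * v q) = _
        refine Finset.sum_congr rfl fun q _ => ?_
        rw [← congrFun h1 q]
        rfl
      rw [this]
      exact hd' ⟨g ⟨v, hv⟩, Set.mem_range_self _⟩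
    have hker : Submodule.span ℂ bs ≤ LinearMap.ker L :=
      Submodule.span_le.mpr fun v hv => LinearMap.mem_ker.mpr (hLbs v hv)
    rw [hbspan'] at hker
    funext q
    have := hker (Submodule.mem_top (x := Pi.single q 1))
    rw [LinearMap.mem_ker, hL] at this
    simpa [Pi.single_apply, mul_ite, Finset.sum_ite_eq'] using this
  have hesurj : Function.Surjective e := by
    have hfr : Module.finrank ℂ (Fin k → ℂ) = Module.finrank ℂ (U → ℂ) := by
      rw [Module.finrank_fintype_fun_eq_card, Module.finrank_fintype_fun_eq_card,
        Fintype.card_fin, hcardU]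
    exact (LinearMap.injective_iff_surjective_of_finrank_eq_finrank hfr).mp heinj
  -- choose correction coefficients
  choose d hd using fun κ : Fin k ⊕ K' => hesurj (fun u : U => c u.1 κ)
  have hdU : ∀ (κ) (u : Fin (trank T)) (hu : u ∈ U), (∑ q, d κ q * M q u) = c u κ := by
    intro κ u hu
    exact congrFun (hd κ) ⟨u, hu⟩
  -- the corrected tensor
  set T' : I → J → (Fin k ⊕ K') → ℂ :=
    fun i j κ => T i j κ - ∑ q, d κ q * S q i j with hT'
  have hmod : ∀ κ, ∃ v ∈ Submodule.span ℂ (Set.range S),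
      (Matrix.of fun i j => T' i j κ) = (Matrix.of fun i j => T i j κ) - v := by
    intro κ
    refine ⟨∑ q, d κ q • S q, ?_, ?_⟩
    · exact Submodule.sum_mem _ fun q _ =>
        Submodule.smul_mem _ _ (Submodule.subset_span ⟨q, rfl⟩)
    · ext i j
      simp [hT', Matrix.sum_apply]
  -- T' has rank ≤ trank T - k
  set F : {u : Fin (trank T) // u ∉ U} → (I → J → (Fin k ⊕ K') → ℂ) :=
    fun u i j κ => a u.1 i * b u.1 j * (c u.1 κ - ∑ q, d κ q * M q u.1) with hF
  have hFsimple : ∀ u, Simple (F u) := fun u =>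
    ⟨a u.1, b u.1, fun κ => c u.1 κ - ∑ q, d κ q * M q u.1, fun i j κ => rfl⟩
  have hFsum : ∀ i j κ, (∑ u, F u i j κ) = T' i j κ := by
    intro i j κ
    set G : Fin (trank T) → ℂ := fun u => a u i * b u j * (c u κ - ∑ q, d κ q * M q u) with hG
    have h1 : (∑ u, F u i j κ) = ∑ u ∈ Finset.univ.filter (fun u => u ∉ U), G u := by
      have h0 : (∑ u, F u i j κ) = ∑ u : {u : Fin (trank T) // u ∉ U}, G u.1 := by
        simp only [hF, hG]
      rw [h0, ← Finset.sum_subtype (Finset.univ.filter (fun u : Fin (trank T) => u ∉ U))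
        (fun x => by simp) G]
    have h2 : ∑ u ∈ Finset.univ.filter (fun u => u ∈ U), G u = 0 := by
      refine Finset.sum_eq_zero fun u hu => ?_
      have hu' : u ∈ U := (Finset.mem_filter.mp hu).2
      rw [hG]
      simp only
      rw [hdU κ u hu']
      ring_nf
    have h3 : (∑ u, G u) = T' i j κ := by
      have : (∑ u, G u) = (∑ u, a u i * b u j * c u κ)
          - ∑ u, a u i * b u j * ∑ q, d κ q * M q u := by
        rw [← Finset.sum_sub_distrib]
        exact Finset.sum_congr rfl fun u _ => by ring
      rw [this]
      have hA : (∑ u, a u i * b u j * c u κ) = T i j κ := by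
        rw [← hsum i j κ]
        exact Finset.sum_congr rfl fun u _ => (habc u i j κ).symm
      have hB : (∑ u, a u i * b u j * ∑ q, d κ q * M q u)
          = ∑ q, d κ q * S q i j := by
        calc ∑ u, a u i * b u j * ∑ q, d κ q * M q u
            = ∑ u, ∑ q, d κ q * (a u i * b u j * M q u) := by
              refine Finset.sum_congr rfl fun u _ => ?_
              rw [Finset.mul_sum]
              exact Finset.sum_congr rfl fun q _ => by ring
          _ = ∑ q, ∑ u, d κ q * (a u i * b u j * M q u) := Finset.sum_comm
          _ = ∑ q, d κ q * S q i j := by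
              refine Finset.sum_congr rfl fun q _ => ?_
              rw [hSlice q i j, Finset.mul_sum]
      rw [hA, hB, hT']
    calc (∑ u, F u i j κ) = ∑ u ∈ Finset.univ.filter (fun u => u ∉ U), G u := h1
      _ = (∑ u ∈ Finset.univ.filter (fun u => u ∈ U), G u)
          + ∑ u ∈ Finset.univ.filter (fun u => u ∉ U), G u := by rw [h2, zero_add]
      _ = ∑ u, G u := Finset.sum_filter_add_sum_filter_not _ _ _
      _ = T' i j κ := h3
  have hT'rank : trank T' ≤ trank T - k := by
    have := trank_le_card T' F hFsimple hFsum
    rwa [Fintype.card_subtype_compl, Fintype.card_fin,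
      show Fintype.card {x : Fin (trank T) // x ∈ U} = k from
        (Fintype.card_congr (Equiv.subtypeEquivRight (by simp))).trans hcardU] at this
  have hsInf : sInf {r | ∃ T'' : I → J → (Fin k ⊕ K') → ℂ,
      (∀ κ, ∃ v ∈ Submodule.span ℂ (Set.range S),
        (Matrix.of fun i j => T'' i j κ) = (Matrix.of fun i j => T i j κ) - v) ∧
      trank T'' = r} ≤ trank T - k :=
    le_trans (Nat.sInf_le ⟨T', hmod, rfl⟩) hT'rank
  refine le_trans (Nat.add_le_add_left hsInf k) ?_
  rw [Nat.add_sub_cancel' hkR]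
end

section
/- Cloning preserves symmetric rank: if T ∈ ℂ^{I×I×I} is symmetric and 𝒯((i₁,i₂),(j₁,j₂),(k₁,k₂)) = T(i₁,j₁,k₁) for a finite nonempty set Σ of copies, then the symmetric rank of 𝒯 equals the symmetric rank of T. -/
/-- The symmetric rank: the smallest `r` such that `T` is a sum of `r` symmetric
simple tensors `c • v ⊗ v ⊗ v`. -/
noncomputable def strank {I : Type*} (T : I → I → I → ℂ) : ℕ :=
  sInf {r | ∃ (c : Fin r → ℂ) (v : Fin r → (I → ℂ)),
    ∀ i j k, (∑ u, c u * (v u i * v u j * v u k)) = T i j k}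

/-- Cloning (duplicating every index `|Σ|` times) preserves symmetric rank
of a symmetric tensor. -/
theorem stmt9 {I S : Type*} [Fintype I] [Fintype S] [Nonempty S]
    (T : I → I → I → ℂ)
    (hsym : ∀ i j k, T i j k = T j i k ∧ T i j k = T i k j) :
    strank (fun (p q r : I × S) => T p.1 q.1 r.1) = strank T := by
  obtain ⟨s₀⟩ := ‹Nonempty S›
  unfold strank
  congr 1
  ext r
  constructor
  · rintro ⟨c, w, h⟩
    exact ⟨c, fun u i => w u (i, s₀), fun i j k => h (i, s₀) (j, s₀) (k, s₀)⟩
  · rintro ⟨c, v, h⟩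
    exact ⟨c, fun u p => v u p.1, fun p q r => h p.1 q.1 r.1⟩
end

section
/- Let T ∈ ℂ^{I×J×K}, with {1,...,k} ⊆ K, and suppose the 3-slices S_1, ..., S_k of T are rank-one and linearly independent. Then for any rank decomposition T = T_1 + ... + T_n and any q ∈ {1,...,k}, if the q-th 3-slice of T_q is collinear to S_q, then the q-th 3-slice of every T_u with u ≠ q is zero. -/
/-- If the 3-slices `S₁,…,S_k` of `T` are rank-one and linearly independent, then in any
rank decomposition `T = T₁ + … + Tₙ` in which the `q`-th 3-slice of `T_q` is collinear
to `S_q`, the `q`-th 3-slice of every `T_u` with `u ≠ q` is zero. -/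
theorem stmt10 {I J K' : Type*} [Fintype I] [Fintype J] [Fintype K'] (k : ℕ)
    (T : I → J → (Fin k ⊕ K') → ℂ)
    (S : Fin k → Matrix I J ℂ)
    (hS : ∀ q, S q = Matrix.of fun i j => T i j (Sum.inl q))
    (hrank1 : ∀ q, (S q).rank = 1)
    (hli : LinearIndependent ℂ S)
    (n : ℕ) (hn : n = trank T)
    (f : Fin n → (I → J → (Fin k ⊕ K') → ℂ))
    (hsimple : ∀ u, Simple (f u))
    (hsum : ∀ i j κ, (∑ u, f u i j κ) = T i j κ)
    (q : Fin k) (hq : (q : ℕ) < n)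
    (hcol : ∃ c : ℂ, c ≠ 0 ∧
      (Matrix.of fun i j => f ⟨q, hq⟩ i j (Sum.inl q)) = c • S q) :
    ∀ u : Fin n, u ≠ ⟨q, hq⟩ → ∀ i j, f u i j (Sum.inl q) = 0 := by
  classical
  choose a b c hf using hsimple
  -- Key: the "matrix parts" of a rank decomposition are linearly independent
  have key : ∀ μ : Fin n → ℂ, (∀ i j, (∑ u, μ u * (a u i * b u j)) = 0) → ∀ v, μ v = 0 := by
    intro μ hμ v
    by_contra hv
    have hcard : Fintype.card {u : Fin n // u ≠ v} = n - 1 := by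
      simp [Fintype.card_subtype_compl]
    let e : Fin (n-1) ≃ {u : Fin n // u ≠ v} := (Fintype.equivFinOfCardEq hcard).symm
    have hmem : (n - 1) ∈ {r | ∃ g : Fin r → (I → J → (Fin k ⊕ K') → ℂ),
        (∀ u, Simple (g u)) ∧ ∀ i j κ, (∑ u, g u i j κ) = T i j κ} := by
      refine ⟨fun t => fun i j κ => a (e t).1 i * b (e t).1 j *
        (c (e t).1 κ - (μ (e t).1 / μ v) * c v κ),
        fun t => ⟨_, _, _, fun i j κ => rfl⟩, ?_⟩
      intro i j κ
      have hstep : (∑ t : Fin (n-1), a ((e t) : Fin n) i * b ((e t) : Fin n) j *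
            (c ((e t) : Fin n) κ - (μ ((e t) : Fin n) / μ v) * c v κ))
          = ∑ w ∈ Finset.univ.erase v, (a w i * b w j * (c w κ - (μ w / μ v) * c v κ)) := by
        rw [Equiv.sum_comp e
          (fun w : {u : Fin n // u ≠ v} => a w.1 i * b w.1 j * (c w.1 κ - (μ w.1 / μ v) * c v κ))]
        rw [Finset.sum_subtype (p := fun x => x ≠ v) (Finset.univ.erase v)
          (fun x => by simp [Finset.mem_erase])]
      rw [show (∑ u : Fin (n-1), (fun t => fun i j κ => a ((e t) : Fin n) i * b ((e t) : Fin n) j *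
            (c ((e t) : Fin n) κ - (μ ((e t) : Fin n) / μ v) * c v κ)) u i j κ)
          = ∑ t : Fin (n-1), a ((e t) : Fin n) i * b ((e t) : Fin n) j *
            (c ((e t) : Fin n) κ - (μ ((e t) : Fin n) / μ v) * c v κ) from rfl, hstep]
      have h1 : ∑ w ∈ Finset.univ.erase v, μ w * (a w i * b w j)
          = - (μ v * (a v i * b v j)) := by
        have h0 := hμ i j
        rw [← Finset.add_sum_erase _ _ (Finset.mem_univ v)] at h0
        linear_combination h0
      have h2 : ∑ w ∈ Finset.univ.erase v, f w i j κ = T i j κ - f v i j κ := by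
        have h0 := hsum i j κ
        rw [← Finset.add_sum_erase _ _ (Finset.mem_univ v)] at h0
        linear_combination h0
      have e1 : ∀ w ∈ Finset.univ.erase v,
          a w i * b w j * (c w κ - (μ w / μ v) * c v κ)
          = f w i j κ - μ w * (a w i * b w j) * ((μ v)⁻¹ * c v κ) := by
        intro w _
        rw [hf w]
        field_simp
      rw [Finset.sum_congr rfl e1, Finset.sum_sub_distrib, ← Finset.sum_mul, h1, h2, hf v]
      field_simp
      ring
    have hle : trank T ≤ n - 1 := Nat.sInf_le hmem
    rw [← hn] at hle
    omega
  obtain ⟨γ, hγ, hM⟩ := hcol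
  set q' : Fin n := ⟨q, hq⟩ with hq'
  have hfq' : ∀ i j, f q' i j (Sum.inl q) = γ * T i j (Sum.inl q) := by
    intro i j
    have h0 := congrFun (congrFun hM i) j
    simpa [hS q] using h0
  set μ : Fin n → ℂ := fun u =>
    if u = q' then c q' (Sum.inl q) - γ⁻¹ * c q' (Sum.inl q) else c u (Sum.inl q) with hμdef
  have hμ : ∀ i j, (∑ u, μ u * (a u i * b u j)) = 0 := by
    intro i j
    have split : ∀ u : Fin n, μ u * (a u i * b u j)
        = c u (Sum.inl q) * (a u i * b u j)
          - (if u = q' then γ⁻¹ * f q' i j (Sum.inl q) else 0) := by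
      intro u
      by_cases h : u = q'
      · subst h
        simp only [hμdef, if_true]
        rw [hf]
        ring
      · simp [hμdef, h]
    rw [Finset.sum_congr rfl (fun u _ => split u), Finset.sum_sub_distrib]
    have hA : ∑ u : Fin n, c u (Sum.inl q) * (a u i * b u j) = T i j (Sum.inl q) := by
      rw [← hsum i j (Sum.inl q)]
      exact Finset.sum_congr rfl (fun u _ => by rw [hf u]; ring)
    rw [hA, Finset.sum_ite_eq' Finset.univ q', if_pos (Finset.mem_univ q'), hfq' i j]
    field_simp
    ring
  intro u hu i j
  have h0 := key μ hμ u
  rw [hμdef] at h0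
  simp only [if_neg hu] at h0
  rw [hf u, h0, mul_zero]
end

section
/- The 4×4×3 tensor E with 3-slices S₁ = [[0,a,1,*],[a,b,1,*],[1,1,0,*],[*,*,*,x]], S₂ = [[a,b,1,*],[b,0,1,*],[1,1,0,*],[*,*,*,y]], S₃ = [[1,1,0,*],[1,1,0,*],[0,0,0,*],[*,*,*,*]] (where the * entries are arbitrary) has rank at least 4 whenever x ≠ y. -/
/-- The 4×4×3 tensor whose 3-slices are
`[[0,a,1,*],[a,b,1,*],[1,1,0,*],[*,*,*,x]]`,
`[[a,b,1,*],[b,0,1,*],[1,1,0,*],[*,*,*,y]]`,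
`[[1,1,0,*],[1,1,0,*],[0,0,0,*],[*,*,*,*]]`
(the `*` entries arbitrary) has rank at least 4 whenever `x ≠ y`. -/
theorem stmt11 (a b x y : ℂ) (hxy : x ≠ y) (E : Fin 4 → Fin 4 → Fin 3 → ℂ)
    (h000 : E 0 0 0 = 0) (h010 : E 0 1 0 = a) (h020 : E 0 2 0 = 1)
    (h100 : E 1 0 0 = a) (h110 : E 1 1 0 = b) (h120 : E 1 2 0 = 1)
    (h200 : E 2 0 0 = 1) (h210 : E 2 1 0 = 1) (h220 : E 2 2 0 = 0)
    (h330 : E 3 3 0 = x)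
    (h001 : E 0 0 1 = a) (h011 : E 0 1 1 = b) (h021 : E 0 2 1 = 1)
    (h101 : E 1 0 1 = b) (h111 : E 1 1 1 = 0) (h121 : E 1 2 1 = 1)
    (h201 : E 2 0 1 = 1) (h211 : E 2 1 1 = 1) (h221 : E 2 2 1 = 0)
    (h331 : E 3 3 1 = y)
    (h002 : E 0 0 2 = 1) (h012 : E 0 1 2 = 1) (h022 : E 0 2 2 = 0)
    (h102 : E 1 0 2 = 1) (h112 : E 1 1 2 = 1) (h122 : E 1 2 2 = 0)
    (h202 : E 2 0 2 = 0) (h212 : E 2 1 2 = 0) (h222 : E 2 2 2 = 0) :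
    4 ≤ trank E := by
  classical
  by_contra hcon
  push_neg at hcon
  have hr3 : trank E ≤ 3 := Nat.lt_succ_iff.mp hcon
  -- the defining set is nonempty
  have hne : {r | ∃ f : Fin r → (Fin 4 → Fin 4 → Fin 3 → ℂ),
      (∀ u, Simple (f u)) ∧ ∀ i j k, (∑ u, f u i j k) = E i j k}.Nonempty := by
    set eqv := Fintype.equivFin (Fin 4 × Fin 4 × Fin 3) with heqv
    refine ⟨Fintype.card (Fin 4 × Fin 4 × Fin 3), fun u i j k =>
      (if i = (eqv.symm u).1 then E (eqv.symm u).1 (eqv.symm u).2.1 (eqv.symm u).2.2 else 0)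
        * (if j = (eqv.symm u).2.1 then 1 else 0)
        * (if k = (eqv.symm u).2.2 then 1 else 0), ?_, ?_⟩
    · intro u
      exact ⟨fun i => if i = (eqv.symm u).1 then
          E (eqv.symm u).1 (eqv.symm u).2.1 (eqv.symm u).2.2 else 0,
        fun j => if j = (eqv.symm u).2.1 then 1 else 0,
        fun k => if k = (eqv.symm u).2.2 then 1 else 0,
        fun i j k => rfl⟩
    · intro i j k
      have h1 := Equiv.sum_comp eqv.symm (fun p : Fin 4 × Fin 4 × Fin 3 =>
        (if i = p.1 then E p.1 p.2.1 p.2.2 else 0) * (if j = p.2.1 then 1 else 0)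
          * (if k = p.2.2 then 1 else 0))
      rw [h1]
      rw [Finset.sum_eq_single (i, j, k)]
      · simp
      · rintro ⟨i0, j0, k0⟩ - hne'
        by_cases e1 : i = i0 <;> by_cases e2 : j = j0 <;> by_cases e3 : k = k0 <;>
          first
            | (subst e1; subst e2; subst e3; exact absurd rfl hne')
            | simp [e1, e2, e3]
      · intro h; exact absurd (Finset.mem_univ _) h
  obtain ⟨f, hsimp, hsumf⟩ : ∃ f : Fin (trank E) → (Fin 4 → Fin 4 → Fin 3 → ℂ),
      (∀ u, Simple (f u)) ∧ ∀ i j k, (∑ u, f u i j k) = E i j k := Nat.sInf_mem hne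
  have hsimp' : ∀ u, ∃ α : Fin 4 → ℂ, ∃ β : Fin 4 → ℂ, ∃ γ : Fin 3 → ℂ,
      ∀ i j k, f u i j k = α i * β j * γ k := hsimp
  choose A B C hABC using hsimp'
  have hE : ∀ i j k, (∑ u, A u i * B u j * C u k) = E i j k := by
    intro i j k
    rw [← hsumf i j k]
    exact Finset.sum_congr rfl fun u _ => (hABC u i j k).symm
  -- pad to exactly 3 terms
  have hpad : ∀ F : Fin (trank E) → ℂ,
      (∑ u : Fin 3, if h : (u : ℕ) < trank E then F ⟨u, h⟩ else 0) = ∑ u, F u := by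
    intro F
    have h1 : (∑ u : Fin 3, if h : (u : ℕ) < trank E then F ⟨u, h⟩ else 0)
        = ∑ n ∈ Finset.range 3, (if h : n < trank E then F ⟨n, h⟩ else 0) :=
      Fin.sum_univ_eq_sum_range (fun n => if h : n < trank E then F ⟨n, h⟩ else 0) 3
    have h2 : (∑ u, F u)
        = ∑ n ∈ Finset.range (trank E), (if h : n < trank E then F ⟨n, h⟩ else 0) := by
      rw [← Fin.sum_univ_eq_sum_range (fun n => if h : n < trank E then F ⟨n, h⟩ else 0)
        (trank E)]
      exact Finset.sum_congr rfl fun u _ => by rw [dif_pos u.isLt]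
    rw [h1, h2]
    refine (Finset.sum_subset (Finset.range_subset_range.mpr hr3) ?_).symm
    intro n _ hn
    rw [dif_neg (by simp only [Finset.mem_range] at hn; omega)]
  set A' : Fin 3 → Fin 4 → ℂ :=
    fun u => if h : (u : ℕ) < trank E then A ⟨u, h⟩ else 0 with hA'
  set B' : Fin 3 → Fin 4 → ℂ :=
    fun u => if h : (u : ℕ) < trank E then B ⟨u, h⟩ else 0 with hB'
  set C' : Fin 3 → Fin 3 → ℂ :=
    fun u => if h : (u : ℕ) < trank E then C ⟨u, h⟩ else 0 with hC'
  have hE' : ∀ i j k, (∑ u : Fin 3, A' u i * B' u j * C' u k) = E i j k := by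
    intro i j k
    have step : ∀ u : Fin 3, A' u i * B' u j * C' u k
        = (if h : (u : ℕ) < trank E then A ⟨u, h⟩ i * B ⟨u, h⟩ j * C ⟨u, h⟩ k else 0) := by
      intro u
      by_cases h : (u : ℕ) < trank E
      · simp [hA', hB', hC', h]
      · simp [hA', hB', hC', h]
    rw [Finset.sum_congr rfl fun u _ => step u,
      hpad (fun v => A v i * B v j * C v k)]
    exact hE i j k
  -- linear independence of slices
  have hind : ∀ v : Fin 3 → ℂ,
      (∀ i j : Fin 4, v 0 * E i j 0 + v 1 * E i j 1 + v 2 * E i j 2 = 0) → v = 0 := by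
    intro v hv
    have e02 := hv 0 2; rw [h020, h021, h022] at e02
    have e00 := hv 0 0; rw [h000, h001, h002] at e00
    have e11 := hv 1 1; rw [h110, h111, h112] at e11
    have e01 := hv 0 1; rw [h010, h011, h012] at e01
    have e33 := hv 3 3; rw [h330, h331] at e33
    have h3a : a * v 0 = 0 := by
      linear_combination ((2*a - b)/3) * e02 - (2/3) * e00 + (1/3) * e11 + (1/3) * e01
    have hv2 : v 2 = 0 := by linear_combination e00 - a * e02 + h3a
    have hv0 : v 0 = 0 := by
      have h5 : v 0 * (x - y) = 0 := by
        linear_combination e33 - y * e02 - (E 3 3 2) * hv2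
      rcases mul_eq_zero.mp h5 with h | h
      · exact h
      · exact absurd (sub_eq_zero.mp h) hxy
    have hv1 : v 1 = 0 := by linear_combination e02 - hv0
    funext w
    fin_cases w <;> simpa
  set M : Matrix (Fin 3) (Fin 3) ℂ := Matrix.of fun k u => C' u k with hM
  have hdet : M.det ≠ 0 := by
    intro h0
    obtain ⟨v, hvne, hv0⟩ := Matrix.exists_vecMul_eq_zero_iff.mpr h0
    apply hvne
    apply hind v
    intro i j
    have hu : ∀ u : Fin 3, (∑ k : Fin 3, v k * C' u k) = 0 := by
      intro u
      have := congrFun hv0 u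
      simpa [Matrix.vecMul, dotProduct, hM] using this
    calc v 0 * E i j 0 + v 1 * E i j 1 + v 2 * E i j 2
        = ∑ k : Fin 3, v k * E i j k := by rw [Fin.sum_univ_three]
      _ = ∑ k : Fin 3, v k * ∑ u : Fin 3, A' u i * B' u j * C' u k :=
          Finset.sum_congr rfl fun k _ => by rw [hE']
      _ = ∑ u : Fin 3, (A' u i * B' u j) * ∑ k : Fin 3, v k * C' u k := by
          simp_rw [Finset.mul_sum]
          rw [Finset.sum_comm]
          exact Finset.sum_congr rfl fun u _ => Finset.sum_congr rfl fun k _ => by ring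
      _ = 0 := by simp [hu]
  have hdet' : IsUnit M.det := isUnit_iff_ne_zero.mpr hdet
  set d : Matrix (Fin 3) (Fin 3) ℂ := M⁻¹ with hd
  have hdM : d * M = 1 := Matrix.nonsing_inv_mul M hdet'
  have hMd : M * d = 1 := Matrix.mul_nonsing_inv M hdet'
  have hinv1 : ∀ u w : Fin 3, (∑ k : Fin 3, d u k * C' w k) = if u = w then 1 else 0 := by
    intro u w
    have := congrFun (congrFun hdM u) w
    simpa [Matrix.mul_apply, Matrix.one_apply, hM] using this
  have hMu : ∀ (u : Fin 3) (i j : Fin 4),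
      (∑ k : Fin 3, d u k * E i j k) = A' u i * B' u j := by
    intro u i j
    calc ∑ k : Fin 3, d u k * E i j k
        = ∑ k : Fin 3, d u k * ∑ w : Fin 3, A' w i * B' w j * C' w k :=
          Finset.sum_congr rfl fun k _ => by rw [hE']
      _ = ∑ w : Fin 3, (A' w i * B' w j) * ∑ k : Fin 3, d u k * C' w k := by
          simp_rw [Finset.mul_sum]
          rw [Finset.sum_comm]
          exact Finset.sum_congr rfl fun w _ => Finset.sum_congr rfl fun k _ => by ring
      _ = ∑ w : Fin 3, (A' w i * B' w j) * (if u = w then 1 else 0) :=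
          Finset.sum_congr rfl fun w _ => by rw [hinv1]
      _ = A' u i * B' u j := by simp
  have hkey : ∀ u : Fin 3, d u 0 + d u 1 = 0 := by
    intro u
    have e02 := hMu u 0 2; rw [Fin.sum_univ_three, h020, h021, h022] at e02
    have e20 := hMu u 2 0; rw [Fin.sum_univ_three, h200, h201, h202] at e20
    have e22 := hMu u 2 2; rw [Fin.sum_univ_three, h220, h221, h222] at e22
    have hsq : (d u 0 + d u 1) * (d u 0 + d u 1) = 0 := by
      linear_combination (d u 0 + d u 1) * e02 + (A' u 0 * B' u 2) * e20
        - (A' u 0 * B' u 0) * e22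
    exact mul_self_eq_zero.mp hsq
  have h00 : (∑ u : Fin 3, M 0 u * d u 0) = 1 := by
    simpa [Matrix.mul_apply, Matrix.one_apply] using congrFun (congrFun hMd 0) 0
  have h01 : (∑ u : Fin 3, M 0 u * d u 1) = 0 := by
    simpa [Matrix.mul_apply, Matrix.one_apply] using congrFun (congrFun hMd 0) 1
  have hcontra : (1 : ℂ) = 0 := by
    calc (1 : ℂ) = ∑ u : Fin 3, (M 0 u * d u 0 + M 0 u * d u 1) := by
          rw [Finset.sum_add_distrib, h00, h01, add_zero]
      _ = ∑ u : Fin 3, M 0 u * (d u 0 + d u 1) :=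
          Finset.sum_congr rfl fun u _ => by ring
      _ = 0 := by simp [hkey]
  exact one_ne_zero hcontra
end

section
/- If a tensor T has rank r and a subset of its 3-slices {S_i}_{i∈A} are pairwise equal nonzero matrices, then in any rank decomposition T = T_1 + ... + T_r, removing all but one member of each group of equal 3-slices yields a rank decomposition of the restricted tensor; consequently the restricted tensor has rank r. -/
/-- If the 3-slices of `T` indexed by `A` are pairwise equal nonzero matrices, then any
rank decomposition of `T`, restricted to keep only one index `k₀` of the group `A`,
is a rank decomposition of the restricted tensor; consequently the restricted tensor
has the same rank as `T`. -/
theorem stmt13 {I J K : Type*} [Fintype I] [Fintype J] [Fintype K]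
    (T : I → J → K → ℂ) (A : Set K) (k0 : K) (hk0 : k0 ∈ A)
    (heq : ∀ κ ∈ A, ∀ κ' ∈ A, ∀ i j, T i j κ = T i j κ')
    (hne : ∃ i j, T i j k0 ≠ 0)
    (r : ℕ) (hr : r = trank T)
    (f : Fin r → (I → J → K → ℂ)) (hsimple : ∀ u, Simple (f u))
    (hsum : ∀ i j κ, (∑ u, f u i j κ) = T i j κ) :
    ((∀ u, Simple fun i j (κ : {κ : K // κ ∉ A ∨ κ = k0}) => f u i j κ.val) ∧
      (∀ i j (κ : {κ : K // κ ∉ A ∨ κ = k0}),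
        (∑ u, f u i j κ.val) = T i j κ.val) ∧
      r = trank fun i j (κ : {κ : K // κ ∉ A ∨ κ = k0}) => T i j κ.val) ∧
    trank (fun i j (κ : {κ : K // κ ∉ A ∨ κ = k0}) => T i j κ.val) = trank T := by
  classical
  set K' := {κ : K // κ ∉ A ∨ κ = k0} with hK'
  have h1 : ∀ u, Simple fun i j (κ : K') => f u i j κ.val := by
    intro u
    obtain ⟨a, b, c, h⟩ := hsimple u
    exact ⟨a, b, fun κ => c κ.val, fun i j κ => h i j κ.val⟩
  have h2 : ∀ i j (κ : K'), (∑ u, f u i j κ.val) = T i j κ.val :=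
    fun i j κ => hsum i j κ.val
  have hle : trank (fun i j (κ : K') => T i j κ.val) ≤ r :=
    Nat.sInf_le ⟨fun u i j κ => f u i j κ.val, h1, h2⟩
  have hne' : {r' | ∃ f' : Fin r' → (I → J → K' → ℂ),
      (∀ u, Simple (f' u)) ∧ ∀ i j κ, (∑ u, f' u i j κ) = T i j κ.val}.Nonempty :=
    ⟨r, fun u i j κ => f u i j κ.val, h1, h2⟩
  obtain ⟨f', hs', hsum'⟩ := Nat.sInf_mem hne'
  have hge : trank T ≤ trank (fun i j (κ : K') => T i j κ.val) := by
    unfold trank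
    apply Nat.sInf_le
    refine ⟨fun u i j κ => if h : κ ∉ A ∨ κ = k0 then f' u i j ⟨κ, h⟩
      else f' u i j ⟨k0, Or.inr rfl⟩, ?_, ?_⟩
    · intro u
      obtain ⟨a, b, c, h⟩ := hs' u
      refine ⟨a, b, fun κ => if hκ : κ ∉ A ∨ κ = k0 then c ⟨κ, hκ⟩
        else c ⟨k0, Or.inr rfl⟩, ?_⟩
      intro i j κ
      by_cases hκ : κ ∉ A ∨ κ = k0 <;> simp [hκ, h]
    · intro i j κ
      by_cases hκ : κ ∉ A ∨ κ = k0
      · simpa [hκ] using hsum' i j ⟨κ, hκ⟩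
      · have hA : κ ∈ A := by by_contra h; exact hκ (Or.inl h)
        have := hsum' i j ⟨k0, Or.inr rfl⟩
        simp only [dif_neg hκ]
        rw [this]
        exact heq k0 hk0 κ hA i j
  have heqr : trank (fun i j (κ : K') => T i j κ.val) = trank T :=
    le_antisymm (hr ▸ hle) hge
  exact ⟨⟨h1, h2, hr.trans heqr.symm⟩, heqr⟩
end
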